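/- For every real number x with |x| < 2, (1/4)·∑_{k=0}^∞ (−1)^k x^{2k}/C(2k,k) = 1/(4+x²) − x·arcsinh(x/2)/((4+x²)·√(4+x²)), where arcsinh t = log(t + √(t²+1)). -/

import Mathlib

open Real Filter Topology

noncomputable def aa (k : ℕ) : ℝ := (-1)^k / (Nat.centralBinom k : ℝ)

noncomputable def SS (x : ℝ) : ℝ := ∑' k : ℕ, aa k * x ^ (2*k)

noncomputable def DS (x : ℝ) : ℝ := ∑' k : ℕ, aa k * ((2*k : ℕ) * x ^ (2*k - 1))

lemma cb_pos (k : ℕ) : (0:ℝ) < (Nat.centralBinom k : ℝ) := by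
  exact_mod_cast k.centralBinom_pos

lemma aa_abs (k : ℕ) : |aa k| = ((Nat.centralBinom k : ℝ))⁻¹ := by
  rw [aa, abs_div, abs_pow, abs_neg, abs_one, one_pow, one_div,
    abs_of_pos (cb_pos k)]

lemma aa_bound (k : ℕ) : |aa k| ≤ (2*k+1) / 4^k := by
  rw [aa_abs]
  rw [inv_le_iff_one_le_mul₀ (cb_pos k), div_mul_eq_mul_div, le_div_iff₀ (by positivity)]
  have : (4:ℝ)^k ≤ (2*k+1) * (Nat.centralBinom k : ℝ) := by
    rcases Nat.eq_zero_or_pos k with rfl | hk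
    · simp [Nat.centralBinom]
    · have h := Nat.four_pow_le_two_mul_self_mul_centralBinom k hk
      have : (4:ℝ)^k ≤ (2*k) * (Nat.centralBinom k : ℝ) := by exact_mod_cast h
      nlinarith [cb_pos k]
  linarith

lemma aa_rec (k : ℕ) : 2*(2*(k:ℝ)+1) * aa (k+1) = -((k:ℝ)+1) * aa k := by
  have h := Nat.succ_mul_centralBinom_succ k
  have h' : ((k:ℝ)+1) * (Nat.centralBinom (k+1) : ℝ) = 2*(2*k+1) * (Nat.centralBinom k : ℝ) := by
    exact_mod_cast h
  have h1 := (cb_pos k).ne'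
  have h2 := (cb_pos (k+1)).ne'
  rw [aa, aa, pow_succ]
  field_simp
  linear_combination h'

lemma summable_master {q : ℝ} (h0 : 0 ≤ q) (h1 : q < 1) :
    Summable fun k : ℕ => ((k:ℝ)^2+1)*q^k := by
  have h : ‖q‖ < 1 := by rwa [Real.norm_eq_abs, abs_of_nonneg h0]
  have h2 := summable_pow_mul_geometric_of_norm_lt_one (R := ℝ) 2 h
  have g : Summable fun k : ℕ => q^k := summable_geometric_of_lt_one h0 h1
  simpa [add_mul] using h2.add g

lemma SS_term_bound {x : ℝ} (hx : |x| < 2) (k : ℕ) :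
    ‖aa k * x ^ (2*k)‖ ≤ 2 * (((k:ℝ)^2+1) * (x^2/4)^k) := by
  have h1 : ‖aa k * x ^ (2*k)‖ = |aa k| * (x^2/4)^k * 4^k := by
    rw [norm_mul, Real.norm_eq_abs, Real.norm_eq_abs, abs_pow, pow_mul, sq_abs,
      div_pow, mul_assoc]
    congr 1
    rw [div_mul_cancel₀]
    · positivity
  rw [h1]
  have h2 : |aa k| * (x^2/4)^k * 4^k ≤ ((2*k+1)/4^k) * (x^2/4)^k * 4^k := by
    have := aa_bound k
    have hq : (0:ℝ) ≤ (x^2/4)^k := by positivity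
    have h4 : (0:ℝ) < 4^k := by positivity
    gcongr
  refine h2.trans ?_
  rw [div_mul_eq_mul_div, mul_comm ((2*(k:ℝ)+1)) _, mul_div_assoc, mul_assoc,
    div_mul_cancel₀ _ (by positivity : (4:ℝ)^k ≠ 0)]
  have hq : (0:ℝ) ≤ (x^2/4)^k := by positivity
  nlinarith [sq_nonneg ((k:ℝ)-1)]

lemma q_facts {x : ℝ} (hx : |x| < 2) : 0 ≤ x^2/4 ∧ x^2/4 < 1 := by
  constructor
  · positivity
  · nlinarith [sq_abs x, abs_nonneg x]

lemma summable_SS {x : ℝ} (hx : |x| < 2) : Summable fun k : ℕ => aa k * x ^ (2*k) := by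
  obtain ⟨h0, h1⟩ := q_facts hx
  exact Summable.of_norm_bounded ((summable_master h0 h1).mul_left 2) (SS_term_bound hx)

lemma DS_term_bound {r : ℝ} (hr1 : 1 ≤ r) {y : ℝ} (hy : |y| ≤ r) (k : ℕ) :
    ‖aa k * (((2*k : ℕ) : ℝ) * y ^ (2*k - 1))‖ ≤ (6/r) * (((k:ℝ)^2+1) * (r^2/4)^k) := by
  have hr0 : (0:ℝ) < r := by linarith
  rcases Nat.eq_zero_or_pos k with rfl | hk
  · simp
    positivity
  have hy0 := abs_nonneg y
  have h1 : ‖aa k * (((2*k : ℕ) : ℝ) * y ^ (2*k - 1))‖ = |aa k| * (2*k * |y|^(2*k-1)) := by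
    rw [norm_mul, norm_mul, Real.norm_eq_abs, Real.norm_eq_abs, Real.norm_eq_abs, abs_pow]
    push_cast
    rw [abs_of_nonneg (by positivity : (0:ℝ) ≤ 2*(k:ℝ))]
  rw [h1]
  have hyr : |y|^(2*k-1) ≤ r^(2*k-1) := pow_le_pow_left₀ hy0 hy _
  have h2 : |aa k| * (2*k * |y|^(2*k-1)) ≤ ((2*k+1)/4^k) * (2*k * r^(2*k-1)) := by
    have := aa_bound k
    have h3 : (0:ℝ) ≤ 2*(k:ℝ) := by positivity
    have h4 : (0:ℝ) ≤ |y|^(2*k-1) := by positivity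
    have h5 : (0:ℝ) ≤ (2*(k:ℝ)+1)/4^k := by positivity
    have h6 : 2*(k:ℝ) * |y|^(2*k-1) ≤ 2*(k:ℝ) * r^(2*k-1) := by
      apply mul_le_mul_of_nonneg_left hyr h3
    calc |aa k| * (2*k * |y|^(2*k-1)) ≤ ((2*k+1)/4^k) * (2*k * |y|^(2*k-1)) := by
          apply mul_le_mul_of_nonneg_right this (by positivity)
      _ ≤ ((2*k+1)/4^k) * (2*k * r^(2*k-1)) := by
          apply mul_le_mul_of_nonneg_left h6 h5
  refine h2.trans ?_
  have hpow : r^(2*k-1) = r^(2*k) / r := by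
    rw [eq_div_iff hr0.ne', ← pow_succ]
    congr 1
    omega
  have hpow2 : (r^2/4)^k = r^(2*k) / 4^k := by
    rw [div_pow, ← pow_mul]
  rw [hpow, hpow2]
  have key : (2*(k:ℝ)+1) * (2*(k:ℝ)) ≤ 6*((k:ℝ)^2+1) := by nlinarith [sq_nonneg ((k:ℝ)-1)]
  have e1 : (2*(k:ℝ)+1)/4^k * (2*(k:ℝ) * (r^(2*k)/r)) =
      ((2*(k:ℝ)+1)*(2*(k:ℝ))) * (r^(2*k)/(4^k*r)) := by
    field_simp
  have e2 : 6/r * (((k:ℝ)^2+1) * (r^(2*k)/4^k)) =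
      (6*((k:ℝ)^2+1)) * (r^(2*k)/(4^k*r)) := by
    field_simp
  rw [e1, e2]
  exact mul_le_mul_of_nonneg_right key (by positivity)

lemma summable_DS {x : ℝ} (hx : |x| < 2) :
    Summable fun k : ℕ => aa k * (((2*k : ℕ) : ℝ) * x ^ (2*k - 1)) := by
  set r : ℝ := (|x|+2)/2 with hrdef
  have hax := abs_nonneg x
  have hr1 : 1 ≤ r := by rw [hrdef]; linarith
  have hq0 : 0 ≤ r^2/4 := by positivity
  have hq1 : r^2/4 < 1 := by
    have : r < 2 := by rw [hrdef]; linarith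
    nlinarith [hr1]
  exact Summable.of_norm_bounded (((summable_master hq0 hq1).mul_left (6/r)))
    (fun k => DS_term_bound hr1 (by rw [hrdef]; linarith) k)

lemma hasDerivAt_SS {x : ℝ} (hx : |x| < 2) : HasDerivAt SS (DS x) x := by
  set r : ℝ := (|x|+2)/2 with hrdef
  have hax := abs_nonneg x
  have hr1 : 1 ≤ r := by rw [hrdef]; linarith
  have hrx : |x| < r := by rw [hrdef]; linarith
  have hr2 : r < 2 := by rw [hrdef]; linarith
  have hq0 : 0 ≤ r^2/4 := by positivity
  have hq1 : r^2/4 < 1 := by nlinarith [hr1]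
  have h0 : (0:ℝ) ∈ Set.Ioo (-r) r := by
    constructor <;> [linarith; linarith]
  have hxmem : x ∈ Set.Ioo (-r) r := by
    have := abs_lt.1 hrx
    exact ⟨this.1, this.2⟩
  exact hasDerivAt_tsum_of_isPreconnected
    ((summable_master hq0 hq1).mul_left (6/r)) isOpen_Ioo (convex_Ioo _ _).isPreconnected
    (fun n y _ => (hasDerivAt_pow (2*n) y).const_mul (aa n))
    (fun n y hy => DS_term_bound hr1 (le_of_lt (abs_lt.2 ⟨hy.1, hy.2⟩)) n)
    h0 (summable_SS (by norm_num)) hxmem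
lemma aa_zero : aa 0 = 1 := by simp [aa, Nat.centralBinom]

lemma ode_SS {x : ℝ} (hx : |x| < 2) :
    x*(4+x^2)*DS x + (2*x^2-4)*SS x + 4 = 0 := by
  have hS : HasSum (fun k : ℕ => aa k * x ^ (2*k)) (SS x) := (summable_SS hx).hasSum
  have hD : HasSum (fun k : ℕ => aa k * (((2*k : ℕ) : ℝ) * x ^ (2*k - 1))) (DS x) :=
    (summable_DS hx).hasSum
  have heq : ∀ k : ℕ, x * (aa k * (((2*k : ℕ) : ℝ) * x ^ (2*k - 1))) =
      (2*(k:ℝ)) * aa k * x^(2*k) := by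
    intro k
    rcases Nat.eq_zero_or_pos k with rfl | hk
    · simp
    have hpow : x ^ (2*k) = x * x^(2*k-1) := by
      rw [← pow_succ']
      congr 1
      omega
    rw [hpow]
    push_cast
    ring
  have hP : HasSum (fun k : ℕ => (2*(k:ℝ)) * aa k * x^(2*k)) (x * DS x) := by
    have h := hD.mul_left x
    simpa only [heq] using h
  set g : ℕ → ℝ := fun k => (8*(k:ℝ)-4) * aa k * x^(2*k) with hgdef
  have hgsum : Summable g := by
    refine ((hP.summable.mul_left 4).sub ((summable_SS hx).mul_left 4)).congr (fun k => ?_)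
    simp only [hgdef]
    ring
  have hgG : HasSum g (∑' k, g k) := hgsum.hasSum
  have hshift : HasSum (fun k => g (k+1)) ((∑' k, g k) - g 0) := by
    refine (hasSum_nat_add_iff 1).mpr ?_
    simpa using hgG
  have htel : HasSum (fun k => g k - g (k+1)) ((∑' k, g k) - ((∑' k, g k) - g 0)) :=
    hgG.sub hshift
  have hterm : ∀ k : ℕ, g k - g (k+1) =
      (4+x^2) * ((2*(k:ℝ))*aa k*x^(2*k)) + (2*x^2-4) * (aa k * x^(2*k)) := by
    intro k
    have hrec : aa (k+1) = -((k:ℝ)+1) * aa k / (2*(2*(k:ℝ)+1)) := by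
      rw [eq_div_iff (by positivity)]
      linear_combination aa_rec k
    have hpow : x^(2*(k+1)) = x^(2*k) * x^2 := by
      rw [← pow_add]
      congr 1
    simp only [hgdef, hrec, hpow]
    push_cast
    field_simp
    ring
  have hcomb : HasSum (fun k : ℕ => (4+x^2) * ((2*(k:ℝ))*aa k*x^(2*k)) +
      (2*x^2-4) * (aa k * x^(2*k))) ((4+x^2)*(x*DS x) + (2*x^2-4)*SS x) :=
    (hP.mul_left _).add (hS.mul_left _)
  have htel' : HasSum (fun k : ℕ => (4+x^2) * ((2*(k:ℝ))*aa k*x^(2*k)) +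
      (2*x^2-4) * (aa k * x^(2*k))) ((∑' k, g k) - ((∑' k, g k) - g 0)) := by
    simpa only [hterm] using htel
  have huniq := hcomb.unique htel'
  have hg0 : g 0 = -4 := by simp [hgdef, aa_zero]
  rw [hg0] at huniq
  linear_combination huniq
noncomputable def TT (x : ℝ) : ℝ :=
  4/(4+x^2) - 4*x*Real.arsinh (x/2)/((4+x^2)*Real.sqrt (4+x^2))

lemma TT_deriv (x : ℝ) : ∃ d, HasDerivAt TT d x ∧
    x*(4+x^2)*d + (2*x^2-4)*TT x + 4 = 0 := by
  have hpos : (0:ℝ) < 4+x^2 := by positivity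
  set s : ℝ := Real.sqrt (4+x^2) with hsdef
  have hs : 0 < s := Real.sqrt_pos.2 hpos
  have hs2 : s^2 = 4+x^2 := Real.sq_sqrt hpos.le
  have hinner : HasDerivAt (fun y : ℝ => 4+y^2) ((2:ℕ) * x^(2-1)) x :=
    (hasDerivAt_pow 2 x).const_add 4
  have hds : HasDerivAt (fun y : ℝ => Real.sqrt (4+y^2)) (x/s) x := by
    have h := (Real.hasDerivAt_sqrt hpos.ne').comp x hinner
    refine h.congr_deriv ?_
    field_simp
    ring
  have hdA : HasDerivAt (fun y : ℝ => Real.arsinh (y/2)) (1/s) x := by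
    have hinner2 : HasDerivAt (fun y : ℝ => y/2) (1/2) x := (hasDerivAt_id x).div_const 2
    have h := (Real.hasDerivAt_arsinh (x/2)).comp x hinner2
    have hhalf : Real.sqrt (1+(x/2)^2) = s/2 := by
      rw [show (1:ℝ)+(x/2)^2 = (4+x^2) * (1/2)^2 by ring,
        Real.sqrt_mul hpos.le, Real.sqrt_sq (by norm_num : (0:ℝ) ≤ 1/2)]
      ring
    rw [hhalf] at h
    refine h.congr_deriv ?_
    rw [inv_div]
    field_simp
  have h1 : HasDerivAt (fun y : ℝ => 4/(4+y^2))
      ((0 * (4+x^2) - 4 * ((2:ℕ) * x^(2-1))) / (4+x^2)^2) x :=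
    (hasDerivAt_const x (4:ℝ)).div hinner hpos.ne'
  have h2 : HasDerivAt (fun y : ℝ => 4*y*Real.arsinh (y/2))
      (4*1*Real.arsinh (x/2) + 4*x*(1/s)) x :=
    ((hasDerivAt_id x).const_mul 4).mul hdA
  have h3 : HasDerivAt (fun y : ℝ => (4+y^2)*Real.sqrt (4+y^2))
      ((2:ℕ) * x^(2-1) * s + (4+x^2)*(x/s)) x := hinner.mul hds
  have hdenne : (4+x^2)*s ≠ 0 := by positivity
  have h4 := h2.div h3 hdenne
  refine ⟨_, (h1.sub h4 : HasDerivAt TT _ x), ?_⟩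
  rw [TT]
  set A := Real.arsinh (x/2) with hAdef
  rw [show (4:ℝ)+x^2 = s^2 from hs2.symm]
  rw [Real.sqrt_sq hs.le]
  field_simp
  linear_combination (4*s - 4*x*A) * hs2
noncomputable def VV (x : ℝ) : ℝ := (SS x - TT x) * Real.sqrt (4+x^2) ^ 3

lemma VV_deriv {x : ℝ} (hx : |x| < 2) : ∃ d, HasDerivAt VV d x ∧ x * d = VV x := by
  have hpos : (0:ℝ) < 4+x^2 := by positivity
  set s : ℝ := Real.sqrt (4+x^2) with hsdef
  have hs : 0 < s := Real.sqrt_pos.2 hpos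
  have hs2 : s^2 = 4+x^2 := Real.sq_sqrt hpos.le
  have hinner : HasDerivAt (fun y : ℝ => 4+y^2) ((2:ℕ) * x^(2-1)) x :=
    (hasDerivAt_pow 2 x).const_add 4
  have hds : HasDerivAt (fun y : ℝ => Real.sqrt (4+y^2)) (x/s) x := by
    have h := (Real.hasDerivAt_sqrt hpos.ne').comp x hinner
    refine h.congr_deriv ?_
    field_simp
    ring
  obtain ⟨dT, hdT, hodeT⟩ := TT_deriv x
  have hodeS := ode_SS hx
  have hW : HasDerivAt (fun y => SS y - TT y) (DS x - dT) x := (hasDerivAt_SS hx).sub hdT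
  have hs3 : HasDerivAt (fun y : ℝ => Real.sqrt (4+y^2) ^ 3) ((3:ℕ) * s^(3-1) * (x/s)) x :=
    hds.pow 3
  refine ⟨_, hW.mul hs3, ?_⟩
  show x * ((DS x - dT) * s^3 + (SS x - TT x) * ((3:ℕ) * s^(3-1) * (x/s))) = VV x
  rw [VV]
  have hsub : x*(4+x^2)*(DS x - dT) + (2*x^2-4)*(SS x - TT x) = 0 := by
    linear_combination hodeS - hodeT
  field_simp
  linear_combination s^2 * hsub + (s^2*(x*(DS x - dT) - (SS x - TT x))) * hs2
lemma SS_even (x : ℝ) : SS (-x) = SS x := by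
  unfold SS
  congr 1
  funext k
  rw [pow_mul, pow_mul, neg_sq]

lemma TT_even (x : ℝ) : TT (-x) = TT x := by
  unfold TT
  rw [neg_sq, neg_div, Real.arsinh_neg]
  ring

lemma VV_even (x : ℝ) : VV (-x) = VV x := by
  unfold VV
  rw [SS_even, TT_even, neg_sq]

lemma SS_zero : SS 0 = 1 := by
  unfold SS
  rw [tsum_eq_single 0 ?_]
  · simp [aa_zero]
  · intro k hk
    rw [zero_pow (by omega : 2*k ≠ 0), mul_zero]

lemma TT_zero : TT 0 = 1 := by
  unfold TT
  norm_num

lemma VV_zero' : VV 0 = 0 := by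
  unfold VV
  rw [SS_zero, TT_zero]
  ring

lemma deriv_VV_zero (d : ℝ) (hd : HasDerivAt VV d 0) : d = 0 := by
  have h0 : HasDerivAt (fun y : ℝ => -y) (-1) (0:ℝ) := hasDerivAt_neg 0
  have hneg : HasDerivAt (VV ∘ fun y => -y) (d * (-1)) 0 :=
    HasDerivAt.comp 0 (by rw [neg_zero]; exact hd) h0
  have heq : (VV ∘ fun y => -y) = VV := funext fun y => VV_even y
  rw [heq] at hneg
  have := hneg.unique hd
  linarith

lemma VV_pos_zero {x : ℝ} (h0 : 0 < x) (h2 : x < 2) : VV x = 0 := by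
  have hg : ∀ t : ℝ, 0 < t → t < 2 → HasDerivAt (fun u => VV u / u) 0 t := by
    intro t ht0 ht2
    obtain ⟨d, hd, hxd⟩ := VV_deriv (by rw [abs_of_pos ht0]; exact ht2)
    have h := hd.div (hasDerivAt_id t) ht0.ne'
    refine h.congr_deriv ?_
    rw [div_eq_zero_iff]
    left
    simp only [id_eq]
    linear_combination hxd
  have key : ∀ ε : ℝ, 0 < ε → ε ≤ x → VV x / x = VV ε / ε := by
    intro ε hε hεx
    have := constant_of_has_deriv_right_zero (f := fun u => VV u / u) (a := ε) (b := x)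
      (fun t ht => ((hg t (lt_of_lt_of_le hε ht.1) (lt_of_le_of_lt ht.2 h2)).continuousAt).continuousWithinAt)
      (fun t ht => (hg t (lt_of_lt_of_le hε ht.1) (ht.2.trans h2)).hasDerivWithinAt)
      x ⟨hεx, le_refl x⟩
    exact this
  obtain ⟨d0, hd0, _⟩ := VV_deriv (show |(0:ℝ)| < 2 by norm_num)
  have hd00 : d0 = 0 := deriv_VV_zero d0 hd0
  rw [hd00] at hd0
  have hslope := hasDerivAt_iff_tendsto_slope.1 hd0
  have hsub : (𝓝[>] (0:ℝ)) ≤ 𝓝[≠] (0:ℝ) := nhdsWithin_mono 0 (fun y hy => ne_of_gt hy)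
  have h1 : Filter.Tendsto (slope VV 0) (𝓝[>] (0:ℝ)) (𝓝 0) := hslope.mono_left hsub
  have h2' : slope VV 0 =ᶠ[𝓝[>] (0:ℝ)] fun _ => VV x / x := by
    filter_upwards [Ioo_mem_nhdsGT_of_mem (Set.mem_Ico.mpr ⟨le_refl (0:ℝ), h0⟩)] with t ht
    rw [slope_def_field, VV_zero', sub_zero, sub_zero, ← key t ht.1 ht.2.le]
  have hlim2 : Filter.Tendsto (slope VV 0) (𝓝[>] (0:ℝ)) (𝓝 (VV x / x)) :=
    Filter.Tendsto.congr' h2'.symm tendsto_const_nhds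
  have huniq : (0:ℝ) = VV x / x := tendsto_nhds_unique h1 hlim2
  rcases div_eq_zero_iff.1 huniq.symm with h | h
  · exact h
  · exact absurd h h0.ne'

lemma VV_eq_zero {x : ℝ} (hx : |x| < 2) : VV x = 0 := by
  obtain ⟨hl, hr⟩ := abs_lt.1 hx
  rcases lt_trichotomy x 0 with hneg | rfl | hpos
  · rw [show x = -(-x) by ring, VV_even]
    exact VV_pos_zero (by linarith) (by linarith)
  · exact VV_zero'
  · exact VV_pos_zero hpos hr

theorem stmt_1 (x : ℝ) (hx : |x| < 2) :
    (1 / 4) * ∑' k : ℕ, (-1 : ℝ) ^ k * x ^ (2 * k) / (Nat.choose (2 * k) k : ℝ) =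
      1 / (4 + x ^ 2) -
        x * Real.log (x / 2 + Real.sqrt ((x / 2) ^ 2 + 1)) /
          ((4 + x ^ 2) * Real.sqrt (4 + x ^ 2)) := by
  have hV := VV_eq_zero hx
  have hpos : (0:ℝ) < 4+x^2 := by positivity
  have hs3 : Real.sqrt (4+x^2)^3 ≠ 0 := by
    have := Real.sqrt_pos.2 hpos
    positivity
  have hST : SS x = TT x := by
    rcases mul_eq_zero.1 hV with h | h
    · linarith [sub_eq_zero.1 h]
    · exact absurd h hs3
  have htsum : ∑' k : ℕ, (-1:ℝ)^k * x^(2*k) / (Nat.choose (2*k) k : ℝ) = SS x := by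
    unfold SS
    congr 1
    funext k
    have hcb : Nat.centralBinom k = (2*k).choose k := rfl
    rw [aa, hcb]
    ring
  have harsinh : Real.arsinh (x/2) = Real.log (x/2 + Real.sqrt ((x/2)^2+1)) := by
    rw [Real.arsinh, add_comm (1:ℝ)]
  rw [htsum, hST]
  unfold TT
  rw [harsinh]
  ring
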